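/- For any r-regular bipartite graph G on 2n vertices (r ≥ 2), the number of 3-matchings is φ(3,G) = C(nr,3) − 2n·C(r,3) − nr(r−1)^2 − 2n·C(r,2)·(nr − 2r − (r−2)). In particular, φ(3,G) depends only on n and r. -/

import Mathlib

open Polynomial

/-- Number of `m`-matchings of a simple graph. -/
noncomputable def matchCount {V : Type*} [Fintype V] (G : SimpleGraph V) (m : ℕ) : ℕ := by
  classical
  exact (((Finset.univ : Finset (Sym2 V)).powersetCard m).filter
    (fun s => (∀ e ∈ s, e ∈ G.edgeSet) ∧
      ∀ e ∈ s, ∀ f ∈ s, e ≠ f → ∀ v ∈ e, v ∉ f)).card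

namespace RBM3


variable {V : Type*}

def pd (e f : Sym2 V) : Prop := ∀ v ∈ e, v ∉ f
lemma pd_symm {e f : Sym2 V} (h : pd e f) : pd f e := fun v hvf hve => h v hve hvf
lemma not_pd_self (e : Sym2 V) : ¬ pd e e := by
  induction e with
  | _ a b => exact fun h => h a (by simp) (by simp)
lemma not_pd_iff {e f : Sym2 V} : ¬ pd e f ↔ ∃ v, v ∈ e ∧ v ∈ f := by
  constructor
  · intro h
    by_contra h2
    push_neg at h2
    exact h fun v hv hvf => h2 v hv hvf
  · rintro ⟨v, hv, hf⟩ h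
    exact h v hv hf
lemma not_pd_comm {e f : Sym2 V} : ¬ pd e f ↔ ¬ pd f e := by
  rw [not_pd_iff, not_pd_iff]
  exact ⟨fun ⟨v, h1, h2⟩ => ⟨v, h2, h1⟩, fun ⟨v, h1, h2⟩ => ⟨v, h2, h1⟩⟩
lemma edge_rep {G : SimpleGraph V} {e : Sym2 V} (he : e ∈ G.edgeSet) :
    ∃ a b, G.Adj a b ∧ e = s(a, b) := by
  induction e with
  | _ a b => exact ⟨a, b, he, rfl⟩
lemma no_tri {G : SimpleGraph V} (hbip : G.Colorable 2) {a b c : V}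
    (hab : G.Adj a b) (hac : G.Adj a c) (hbc : G.Adj b c) : False := by
  obtain ⟨C⟩ := hbip
  have h1 : (C a).val ≠ (C b).val := fun h => C.valid hab (Fin.ext h)
  have h2 : (C a).val ≠ (C c).val := fun h => C.valid hac (Fin.ext h)
  have h3 : (C b).val ≠ (C c).val := fun h => C.valid hbc (Fin.ext h)
  have := (C a).isLt; have := (C b).isLt; have := (C c).isLt
  omega

variable [Fintype V] {G : SimpleGraph V} [DecidableRel G.Adj] {r : ℕ}

/-- Lemma A: the number of edges sharing a vertex with a given edge (including itself). -/
lemma count_touch (hreg : ∀ v : V, G.degree v = r) {e : Sym2 V} (he : e ∈ G.edgeFinset)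
    (A : Finset (Sym2 V)) (hA : ∀ f, f ∈ A ↔ f ∈ G.edgeFinset ∧ ¬ pd e f) :
    A.card + 1 = 2 * r := by
  classical
  have memI : ∀ (w : V) (f : Sym2 V), f ∈ G.incidenceFinset w ↔ f ∈ G.edgeSet ∧ w ∈ f := by
    intro w f
    rw [SimpleGraph.mem_incidenceFinset]
    exact Iff.rfl
  rw [SimpleGraph.mem_edgeFinset] at he
  obtain ⟨a, b, hab, rfl⟩ := edge_rep he
  have hAeq : A = G.incidenceFinset a ∪ G.incidenceFinset b := by
    ext f
    rw [hA, Finset.mem_union, memI, memI]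
    constructor
    · rintro ⟨hfE, hnpd⟩
      rw [not_pd_iff] at hnpd
      obtain ⟨v, hv, hvf⟩ := hnpd
      rw [Sym2.mem_iff] at hv
      rcases hv with rfl | rfl
      · exact Or.inl ⟨SimpleGraph.mem_edgeFinset.mp hfE, hvf⟩
      · exact Or.inr ⟨SimpleGraph.mem_edgeFinset.mp hfE, hvf⟩
    · rintro (⟨hf, hvf⟩ | ⟨hf, hvf⟩)
      · exact ⟨SimpleGraph.mem_edgeFinset.mpr hf, not_pd_iff.mpr ⟨a, by simp, hvf⟩⟩
      · exact ⟨SimpleGraph.mem_edgeFinset.mpr hf, not_pd_iff.mpr ⟨b, by simp, hvf⟩⟩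
  have hint : G.incidenceFinset a ∩ G.incidenceFinset b = {s(a, b)} := by
    ext f
    rw [Finset.mem_inter, memI, memI, Finset.mem_singleton]
    constructor
    · rintro ⟨⟨hf1, ha⟩, ⟨hf2, hb⟩⟩
      exact ((Sym2.mem_and_mem_iff hab.ne).mp ⟨ha, hb⟩)
    · rintro rfl
      exact ⟨⟨hab, by simp⟩, ⟨hab, by simp⟩⟩
  have hu := Finset.card_union_add_card_inter (G.incidenceFinset a) (G.incidenceFinset b)
  rw [hint, Finset.card_singleton, SimpleGraph.card_incidenceFinset_eq_degree,
    SimpleGraph.card_incidenceFinset_eq_degree, hreg, hreg] at hu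
  rw [hAeq]
  omega


/-- Lemma C: pairs of disjoint edges both touching a given edge. -/
lemma count_pairs (hbip : G.Colorable 2) (hreg : ∀ v : V, G.degree v = r)
    {g : Sym2 V} (hg : g ∈ G.edgeFinset) (P : Finset (Sym2 V × Sym2 V))
    (hP : ∀ q : Sym2 V × Sym2 V, q ∈ P ↔
      ((q.1 ∈ G.edgeFinset ∧ q.2 ∈ G.edgeFinset ∧ pd q.1 q.2) ∧ ¬ pd q.1 g ∧ ¬ pd q.2 g)) :
    P.card = 2 * ((r - 1) * (r - 1)) := by
  classical
  have memI : ∀ (w : V) (e : Sym2 V), e ∈ G.incidenceFinset w ↔ e ∈ G.edgeSet ∧ w ∈ e := by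
    intro w e
    rw [SimpleGraph.mem_incidenceFinset]
    exact Iff.rfl
  rw [SimpleGraph.mem_edgeFinset] at hg
  obtain ⟨u, v, huv, rfl⟩ := edge_rep hg
  set Ju := (G.incidenceFinset u).erase s(u, v) with hJu
  set Jv := (G.incidenceFinset v).erase s(u, v) with hJv
  have hJumem : ∀ f ∈ Ju, f ∈ G.edgeSet ∧ u ∈ f ∧ f ≠ s(u, v) := by
    intro f hf
    rw [hJu, Finset.mem_erase, memI] at hf
    exact ⟨hf.2.1, hf.2.2, hf.1⟩
  have hJvmem : ∀ f ∈ Jv, f ∈ G.edgeSet ∧ v ∈ f ∧ f ≠ s(u, v) := by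
    intro f hf
    rw [hJv, Finset.mem_erase, memI] at hf
    exact ⟨hf.2.1, hf.2.2, hf.1⟩
  -- key disjointness: edges in Ju and Jv are vertex-disjoint
  have key : ∀ e ∈ Ju, ∀ f ∈ Jv, pd e f := by
    intro e he f hf w hwe hwf
    obtain ⟨heE, hue, hene⟩ := hJumem e he
    obtain ⟨hfE, hvf, hfne⟩ := hJvmem f hf
    rw [Sym2.mem_iff_exists] at hue hvf
    obtain ⟨a, rfl⟩ := hue
    obtain ⟨b, rfl⟩ := hvf
    have hua : G.Adj u a := heE
    have hvb : G.Adj v b := hfE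
    rw [Sym2.mem_iff] at hwe hwf
    rcases hwe with rfl | rfl
    · rcases hwf with rfl | rfl
      · exact huv.ne rfl
      · exact hfne (by rw [Sym2.eq_swap])
    · rcases hwf with rfl | rfl
      · exact hene rfl
      · exact no_tri hbip huv hua hvb
  have hPeq : P = Ju ×ˢ Jv ∪ Jv ×ˢ Ju := by
    ext q
    obtain ⟨e, f⟩ := q
    rw [hP, Finset.mem_union, Finset.mem_product, Finset.mem_product]
    constructor
    · rintro ⟨⟨heE, hfE, hpd⟩, hge, hgf⟩
      rw [SimpleGraph.mem_edgeFinset] at heE hfE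
      rw [not_pd_iff] at hge hgf
      obtain ⟨w1, hw1e, hw1g⟩ := hge
      obtain ⟨w2, hw2f, hw2g⟩ := hgf
      have heg : e ≠ s(u, v) := by
        rintro rfl
        exact hpd w2 hw2g hw2f
      have hfg : f ≠ s(u, v) := by
        rintro rfl
        exact hpd w1 hw1e hw1g
      have hemem : e ∈ Ju ∨ e ∈ Jv := by
        rw [Sym2.mem_iff] at hw1g
        rcases hw1g with rfl | rfl
        · exact Or.inl (Finset.mem_erase.mpr ⟨heg, (memI _ _).mpr ⟨heE, hw1e⟩⟩)
        · exact Or.inr (Finset.mem_erase.mpr ⟨heg, (memI _ _).mpr ⟨heE, hw1e⟩⟩)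
      have hfmem : f ∈ Ju ∨ f ∈ Jv := by
        rw [Sym2.mem_iff] at hw2g
        rcases hw2g with rfl | rfl
        · exact Or.inl (Finset.mem_erase.mpr ⟨hfg, (memI _ _).mpr ⟨hfE, hw2f⟩⟩)
        · exact Or.inr (Finset.mem_erase.mpr ⟨hfg, (memI _ _).mpr ⟨hfE, hw2f⟩⟩)
      have hnotbothu : ¬ (e ∈ Ju ∧ f ∈ Ju) := by
        rintro ⟨h1, h2⟩
        exact hpd u (hJumem e h1).2.1 (hJumem f h2).2.1
      have hnotbothv : ¬ (e ∈ Jv ∧ f ∈ Jv) := by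
        rintro ⟨h1, h2⟩
        exact hpd v (hJvmem e h1).2.1 (hJvmem f h2).2.1
      rcases hemem with he | he <;> rcases hfmem with hf | hf
      · exact absurd ⟨he, hf⟩ hnotbothu
      · exact Or.inl ⟨he, hf⟩
      · exact Or.inr ⟨he, hf⟩
      · exact absurd ⟨he, hf⟩ hnotbothv
    · rintro (⟨he, hf⟩ | ⟨he, hf⟩)
      · obtain ⟨heE, hue, -⟩ := hJumem e he
        obtain ⟨hfE, hvf, -⟩ := hJvmem f hf
        exact ⟨⟨SimpleGraph.mem_edgeFinset.mpr heE, SimpleGraph.mem_edgeFinset.mpr hfE,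
          key e he f hf⟩,
          not_pd_iff.mpr ⟨u, hue, by simp⟩, not_pd_iff.mpr ⟨v, hvf, by simp⟩⟩
      · obtain ⟨heE, hve, -⟩ := hJvmem e he
        obtain ⟨hfE, huf, -⟩ := hJumem f hf
        exact ⟨⟨SimpleGraph.mem_edgeFinset.mpr heE, SimpleGraph.mem_edgeFinset.mpr hfE,
          pd_symm (key f hf e he)⟩,
          not_pd_iff.mpr ⟨v, hve, by simp⟩, not_pd_iff.mpr ⟨u, huf, by simp⟩⟩
  have hdisj : Disjoint (Ju ×ˢ Jv) (Jv ×ˢ Ju) := by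
    rw [Finset.disjoint_left]
    rintro ⟨e, f⟩ h1 h2
    rw [Finset.mem_product] at h1 h2
    have h3 := (hJumem e h1.1).2.1
    have h4 := (hJvmem e h2.1).2.1
    exact (hJumem e h1.1).2.2 ((Sym2.mem_and_mem_iff huv.ne).mp ⟨h3, h4⟩)
  have hcardJu : Ju.card = r - 1 := by
    rw [hJu, Finset.card_erase_of_mem, SimpleGraph.card_incidenceFinset_eq_degree, hreg]
    exact (memI _ _).mpr ⟨hg, by simp⟩
  have hcardJv : Jv.card = r - 1 := by
    rw [hJv, Finset.card_erase_of_mem, SimpleGraph.card_incidenceFinset_eq_degree, hreg]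
    exact (memI _ _).mpr ⟨hg, by simp⟩
  rw [hPeq, Finset.card_union_of_disjoint hdisj, Finset.card_product, Finset.card_product,
    hcardJu, hcardJv]
  ring

end RBM3
namespace RBM3X


/-- cardinality of a filtered product, fibered over the first coordinate -/
lemma prod_filter_card_fst {α β : Type*} [DecidableEq α] [DecidableEq β]
    (s : Finset α) (t : Finset β) (p : α → β → Prop) [∀ a b, Decidable (p a b)] :
    ((s ×ˢ t).filter (fun q => p q.1 q.2)).card = ∑ a ∈ s, (t.filter (p a)).card := by
  rw [Finset.card_eq_sum_card_fiberwise (f := Prod.fst) (t := s)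
    (fun q hq => (Finset.mem_product.mp (Finset.mem_filter.mp hq).1).1)]
  refine Finset.sum_congr rfl fun a ha => ?_
  refine Finset.card_nbij' Prod.snd (fun b => (a, b)) ?_ ?_ ?_ ?_
  · intro q hq
    simp only [Finset.mem_coe, Finset.mem_filter, Finset.mem_product] at hq
    obtain ⟨⟨⟨h1, h2⟩, h3⟩, h4⟩ := hq
    rw [Finset.mem_coe, Finset.mem_filter]
    subst h4
    exact ⟨h2, h3⟩
  · intro b hb
    rw [Finset.mem_coe, Finset.mem_filter] at hb
    simp only [Finset.mem_coe, Finset.mem_filter, Finset.mem_product]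
    exact ⟨⟨⟨ha, hb.1⟩, hb.2⟩, trivial⟩
  · intro q hq
    simp only [Finset.mem_coe, Finset.mem_filter] at hq
    rw [← hq.2]
  · intro b _
    rfl

/-- cardinality of a filtered product, fibered over the second coordinate -/
lemma prod_filter_card_snd {α β : Type*} [DecidableEq α] [DecidableEq β]
    (s : Finset α) (t : Finset β) (p : α → β → Prop) [∀ a b, Decidable (p a b)] :
    ((s ×ˢ t).filter (fun q => p q.1 q.2)).card = ∑ b ∈ t, (s.filter (fun a => p a b)).card := by
  rw [Finset.card_eq_sum_card_fiberwise (f := Prod.snd) (t := t)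
    (fun q hq => (Finset.mem_product.mp (Finset.mem_filter.mp hq).1).2)]
  refine Finset.sum_congr rfl fun b hb => ?_
  refine Finset.card_nbij' Prod.fst (fun a => (a, b)) ?_ ?_ ?_ ?_
  · intro q hq
    simp only [Finset.mem_coe, Finset.mem_filter, Finset.mem_product] at hq
    obtain ⟨⟨⟨h1, h2⟩, h3⟩, h4⟩ := hq
    rw [Finset.mem_coe, Finset.mem_filter]
    subst h4
    exact ⟨h1, h3⟩
  · intro a ha
    rw [Finset.mem_coe, Finset.mem_filter] at ha
    simp only [Finset.mem_coe, Finset.mem_filter, Finset.mem_product]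
    exact ⟨⟨⟨ha.1, hb⟩, ha.2⟩, trivial⟩
  · intro q hq
    simp only [Finset.mem_coe, Finset.mem_filter] at hq
    rw [← hq.2]
  · intro a _
    rfl

/-- the six orderings of a 3-element set with a symmetric irreflexive relation -/
lemma orderings_card {α : Type*} [DecidableEq α] (R : α → α → Prop)
    (hsymm : ∀ x y, R x y → R y x) (hirr : ∀ x, ¬ R x x)
    {a b c : α} (hab : R a b) (hac : R a c) (hbc : R b c)
    (T : Finset ((α × α) × α))
    (hT : ∀ p : (α × α) × α, p ∈ T ↔
      (R p.1.1 p.1.2 ∧ R p.1.1 p.2 ∧ R p.1.2 p.2) ∧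
        ({p.1.1, p.1.2, p.2} : Finset α) = {a, b, c}) :
    T.card = 6 := by
  have hab' : a ≠ b := fun h => hirr _ (h ▸ hab)
  have hac' : a ≠ c := fun h => hirr _ (h ▸ hac)
  have hbc' : b ≠ c := fun h => hirr _ (h ▸ hbc)
  have hT' : T = {((a,b),c), ((a,c),b), ((b,a),c), ((b,c),a), ((c,a),b), ((c,b),a)} := by
    ext p
    obtain ⟨⟨x, y⟩, z⟩ := p
    rw [hT]
    constructor
    · rintro ⟨⟨h12, h13, h23⟩, hs⟩
      have hxy : x ≠ y := fun h => hirr _ (h ▸ h12)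
      have hxz : x ≠ z := fun h => hirr _ (h ▸ h13)
      have hyz : y ≠ z := fun h => hirr _ (h ▸ h23)
      have hx : x = a ∨ x = b ∨ x = c := by
        have : x ∈ ({a,b,c} : Finset α) := hs ▸ (by simp)
        simpa using this
      have hy : y = a ∨ y = b ∨ y = c := by
        have : y ∈ ({a,b,c} : Finset α) := hs ▸ (by simp)
        simpa using this
      have hz : z = a ∨ z = b ∨ z = c := by
        have : z ∈ ({a,b,c} : Finset α) := hs ▸ (by simp)
        simpa using this
      rcases hx with rfl|rfl|rfl <;> rcases hy with rfl|rfl|rfl <;>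
        rcases hz with rfl|rfl|rfl <;> simp_all
    · intro h
      simp only [Finset.mem_insert, Finset.mem_singleton] at h
      rcases h with h|h|h|h|h|h <;> rw [Prod.ext_iff, Prod.ext_iff] at h <;>
        obtain ⟨⟨rfl, rfl⟩, rfl⟩ := h
      · exact ⟨⟨hab, hac, hbc⟩, rfl⟩
      · refine ⟨⟨hac, hab, hsymm _ _ hbc⟩, ?_⟩
        ext w; simp; tauto
      · refine ⟨⟨hsymm _ _ hab, hbc, hac⟩, ?_⟩
        ext w; simp; tauto
      · refine ⟨⟨hbc, hsymm _ _ hab, hsymm _ _ hac⟩, ?_⟩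
        ext w; simp; tauto
      · refine ⟨⟨hsymm _ _ hac, hsymm _ _ hbc, hab⟩, ?_⟩
        ext w; simp; tauto
      · refine ⟨⟨hsymm _ _ hbc, hsymm _ _ hac, hsymm _ _ hab⟩, ?_⟩
        ext w; simp; tauto
  rw [hT']
  have hba' : b ≠ a := hab'.symm
  have hca' : c ≠ a := hac'.symm
  have hcb' : c ≠ b := hbc'.symm
  rw [Finset.card_insert_of_notMem (by simp [Prod.ext_iff, hab', hac', hbc', hba', hca', hcb']),
    Finset.card_insert_of_notMem (by simp [Prod.ext_iff, hab', hac', hbc', hba', hca', hcb']),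
    Finset.card_insert_of_notMem (by simp [Prod.ext_iff, hab', hac', hbc', hba', hca', hcb']),
    Finset.card_insert_of_notMem (by simp [Prod.ext_iff, hab', hac', hbc', hba', hca', hcb']),
    Finset.card_insert_of_notMem (by simp [Prod.ext_iff, hab', hac', hbc', hba', hca', hcb']),
    Finset.card_singleton]

/-- choose identities over ℤ -/
lemma two_choose_two (k : ℕ) : 2 * (k.choose 2 : ℤ) = k * (k - 1) := by
  induction k with
  | zero => simp
  | succ k ih =>
    rw [Nat.choose_succ_succ k 1, Nat.choose_one_right]
    push_cast
    push_cast at ih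
    linarith [ih]

lemma six_choose_three (k : ℕ) : 6 * (k.choose 3 : ℤ) = k * (k - 1) * (k - 2) := by
  induction k with
  | zero => simp
  | succ k ih =>
    have h2 := two_choose_two k
    rw [Nat.choose_succ_succ k 2]
    push_cast
    push_cast at ih h2
    linear_combination ih + 3 * h2

end RBM3X

open Finset RBM3 RBM3X

/-- For any `r`-regular bipartite graph `G` on `2n` vertices (`r ≥ 2`), the number of
3-matchings is `φ(3,G) = C(nr,3) − 2n·C(r,3) − nr(r−1)² − 2n·C(r,2)·(nr − 2r − (r−2))`;
in particular it depends only on `n` and `r`. -/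
theorem regular_bipartite_match_three {V : Type*} [Fintype V]
    (G : SimpleGraph V) [DecidableRel G.Adj] (n r : ℕ) (hr : 2 ≤ r)
    (hcard : Fintype.card V = 2 * n) (hbip : G.Colorable 2)
    (hreg : ∀ v : V, G.degree v = r) :
    (matchCount G 3 : ℤ) =
      ((n * r).choose 3 : ℤ) - 2 * n * (r.choose 3 : ℤ) - n * r * ((r : ℤ) - 1) ^ 2
        - 2 * n * (r.choose 2 : ℤ) * ((n : ℤ) * r - 2 * r - ((r : ℤ) - 2)) := by
  classical
  -- number of edges
  have hmnr : G.edgeFinset.card = n * r := by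
    have h1 : ∑ v : V, G.degree v = 2 * G.edgeFinset.card :=
      G.sum_degrees_eq_twice_card_edges
    have h2 : ∑ v : V, G.degree v = 2 * (n * r) := by
      rw [Finset.sum_congr rfl (fun v _ => hreg v), Finset.sum_const, Finset.card_univ,
        hcard, smul_eq_mul, mul_assoc]
    omega
  -- the set of 3-matchings
  set F := (G.edgeFinset.powersetCard 3).filter
    (fun s => ∀ e ∈ s, ∀ f ∈ s, e ≠ f → pd e f) with hF
  have hmc : matchCount G 3 = F.card := by
    rw [matchCount]
    congr 1
    ext s
    simp only [Finset.mem_filter, Finset.mem_powersetCard, Finset.subset_univ, true_and, hF]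
    constructor
    · rintro ⟨hcard3, hedge, hpair⟩
      exact ⟨⟨fun e he => SimpleGraph.mem_edgeFinset.mpr (hedge e he), hcard3⟩, hpair⟩
    · rintro ⟨⟨hsub, hcard3⟩, hpair⟩
      exact ⟨hcard3, fun e he => SimpleGraph.mem_edgeFinset.mp (hsub he), hpair⟩
  have hFsub : ∀ s ∈ F, s ⊆ G.edgeFinset ∧ s.card = 3 ∧
      (∀ e ∈ s, ∀ f ∈ s, e ≠ f → pd e f) := by
    intro s hs
    rw [hF, Finset.mem_filter, Finset.mem_powersetCard] at hs
    tauto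
  -- pairs of disjoint edges
  set Dset := (G.edgeFinset ×ˢ G.edgeFinset).filter (fun q => pd q.1 q.2) with hDset
  have hDmem : ∀ q ∈ Dset, q.1 ∈ G.edgeFinset ∧ q.2 ∈ G.edgeFinset ∧ pd q.1 q.2 := by
    intro q hq
    rw [hDset, Finset.mem_filter, Finset.mem_product] at hq
    tauto
  -- ordered triples of pairwise disjoint edges
  set T3 := (Dset ×ˢ G.edgeFinset).filter
    (fun p => pd p.1.1 p.2 ∧ pd p.1.2 p.2) with hT3
  -- T3 has 6 |F| elements
  have hT3card : T3.card = 6 * F.card := by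
    have hmap : ∀ p ∈ T3, ({p.1.1, p.1.2, p.2} : Finset (Sym2 V)) ∈ F := by
      intro p hp
      rw [hT3, Finset.mem_filter, Finset.mem_product] at hp
      obtain ⟨⟨hq, h2E⟩, h13, h23⟩ := hp
      obtain ⟨h1E, h2E', h12⟩ := hDmem p.1 hq
      have hne12 : p.1.1 ≠ p.1.2 := fun h => not_pd_self _ (h ▸ h12)
      have hne13 : p.1.1 ≠ p.2 := fun h => not_pd_self _ (h ▸ h13)
      have hne23 : p.1.2 ≠ p.2 := fun h => not_pd_self _ (h ▸ h23)
      rw [hF, Finset.mem_filter, Finset.mem_powersetCard]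
      refine ⟨⟨?_, ?_⟩, ?_⟩
      · intro e he
        simp only [Finset.mem_insert, Finset.mem_singleton] at he
        rcases he with rfl | rfl | rfl
        · exact h1E
        · exact h2E'
        · exact h2E
      · rw [Finset.card_insert_of_notMem (by simp [hne12, hne13]),
          Finset.card_insert_of_notMem (by simp [hne23]), Finset.card_singleton]
      · intro e he f hf hnef
        simp only [Finset.mem_insert, Finset.mem_singleton] at he hf
        rcases he with rfl | rfl | rfl <;> rcases hf with rfl | rfl | rfl <;>
          first
            | exact absurd rfl hnef
            | exact h12
            | exact h13
            | exact h23
            | exact pd_symm h12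
            | exact pd_symm h13
            | exact pd_symm h23
    have hfib : ∀ s ∈ F,
        (T3.filter (fun p => ({p.1.1, p.1.2, p.2} : Finset (Sym2 V)) = s)).card = 6 := by
      intro s hs
      obtain ⟨hsub, hcard3, hpair⟩ := hFsub s hs
      obtain ⟨a, b, c, hab, hac, hbc, rfl⟩ := Finset.card_eq_three.mp hcard3
      have ha : a ∈ ({a, b, c} : Finset (Sym2 V)) := by simp
      have hb : b ∈ ({a, b, c} : Finset (Sym2 V)) := by simp
      have hc : c ∈ ({a, b, c} : Finset (Sym2 V)) := by simp
      refine orderings_card pd (fun x y h => pd_symm h) not_pd_self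
        (hpair a ha b hb hab) (hpair a ha c hc hac) (hpair b hb c hc hbc) _ ?_
      intro p
      rw [Finset.mem_filter, hT3, Finset.mem_filter, Finset.mem_product]
      constructor
      · rintro ⟨⟨⟨hq, -⟩, h13, h23⟩, heq⟩
        exact ⟨⟨(hDmem p.1 hq).2.2, h13, h23⟩, heq⟩
      · rintro ⟨⟨h12, h13, h23⟩, heq⟩
        have hmem : ∀ x ∈ ({p.1.1, p.1.2, p.2} : Finset (Sym2 V)), x ∈ G.edgeFinset := by
          intro x hx
          exact hsub (heq ▸ hx)
        refine ⟨⟨⟨?_, hmem p.2 (by simp)⟩, h13, h23⟩, heq⟩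
        rw [hDset, Finset.mem_filter, Finset.mem_product]
        exact ⟨⟨hmem p.1.1 (by simp), hmem p.1.2 (by simp)⟩, h12⟩
    rw [Finset.card_eq_sum_card_fiberwise hmap, Finset.sum_congr rfl hfib,
      Finset.sum_const, smul_eq_mul, mul_comm]
  -- fiber T3 over the pair
  have e1 : T3.card = ∑ q ∈ Dset,
      (G.edgeFinset.filter (fun g => pd q.1 g ∧ pd q.2 g)).card :=
    prod_filter_card_fst Dset G.edgeFinset (fun q g => pd q.1 g ∧ pd q.2 g)
  -- complements
  have key1 : ∀ q ∈ Dset,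
      (G.edgeFinset.filter (fun g => pd q.1 g ∧ pd q.2 g)).card +
      (G.edgeFinset.filter (fun g => ¬(pd q.1 g ∧ pd q.2 g))).card = G.edgeFinset.card := by
    intro q _
    exact Finset.card_filter_add_card_filter_not _
  have key2 : ∀ q ∈ Dset,
      (G.edgeFinset.filter (fun g => ¬(pd q.1 g ∧ pd q.2 g))).card +
      (G.edgeFinset.filter (fun g => ¬ pd q.1 g ∧ ¬ pd q.2 g)).card + 2 = 4 * r := by
    intro q hq
    obtain ⟨h1, h2, -⟩ := hDmem q hq
    have hu : G.edgeFinset.filter (fun g => ¬(pd q.1 g ∧ pd q.2 g)) =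
        G.edgeFinset.filter (fun g => ¬ pd q.1 g) ∪
        G.edgeFinset.filter (fun g => ¬ pd q.2 g) := by
      rw [← Finset.filter_or]
      exact Finset.filter_congr (fun g _ => by tauto)
    have hw : G.edgeFinset.filter (fun g => ¬ pd q.1 g) ∩
        G.edgeFinset.filter (fun g => ¬ pd q.2 g) =
        G.edgeFinset.filter (fun g => ¬ pd q.1 g ∧ ¬ pd q.2 g) :=
      (Finset.filter_and _ _ _).symm
    have hc := Finset.card_union_add_card_inter
      (G.edgeFinset.filter (fun g => ¬ pd q.1 g))
      (G.edgeFinset.filter (fun g => ¬ pd q.2 g))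
    rw [hw] at hc
    have ha := count_touch hreg h1 (G.edgeFinset.filter (fun g => ¬ pd q.1 g))
      (fun f => Finset.mem_filter)
    have hb := count_touch hreg h2 (G.edgeFinset.filter (fun g => ¬ pd q.2 g))
      (fun f => Finset.mem_filter)
    rw [hu]
    omega
  -- summed versions
  have sum1 : T3.card + (∑ q ∈ Dset,
      (G.edgeFinset.filter (fun g => ¬(pd q.1 g ∧ pd q.2 g))).card) =
      Dset.card * G.edgeFinset.card := by
    rw [e1, ← Finset.sum_add_distrib, Finset.sum_congr rfl key1, Finset.sum_const, smul_eq_mul]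
  have sum2 : (∑ q ∈ Dset,
      (G.edgeFinset.filter (fun g => ¬(pd q.1 g ∧ pd q.2 g))).card) +
      (∑ q ∈ Dset,
      (G.edgeFinset.filter (fun g => ¬ pd q.1 g ∧ ¬ pd q.2 g)).card) +
      2 * Dset.card = 4 * r * Dset.card := by
    have := Finset.sum_congr rfl key2
    rw [Finset.sum_add_distrib, Finset.sum_add_distrib, Finset.sum_const, Finset.sum_const,
      smul_eq_mul, smul_eq_mul] at this
    calc _ = (∑ q ∈ Dset, (G.edgeFinset.filter (fun g => ¬(pd q.1 g ∧ pd q.2 g))).card) +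
        (∑ q ∈ Dset, (G.edgeFinset.filter (fun g => ¬ pd q.1 g ∧ ¬ pd q.2 g)).card) +
        Dset.card * 2 := by ring
      _ = Dset.card * (4 * r) := this
      _ = 4 * r * Dset.card := by ring
  -- the double-touching triples, counted both ways
  have e4 : ((Dset ×ˢ G.edgeFinset).filter
      (fun p => ¬ pd p.1.1 p.2 ∧ ¬ pd p.1.2 p.2)).card =
      ∑ q ∈ Dset, (G.edgeFinset.filter (fun g => ¬ pd q.1 g ∧ ¬ pd q.2 g)).card :=
    prod_filter_card_fst Dset G.edgeFinset (fun q g => ¬ pd q.1 g ∧ ¬ pd q.2 g)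
  have e5 : ((Dset ×ˢ G.edgeFinset).filter
      (fun p => ¬ pd p.1.1 p.2 ∧ ¬ pd p.1.2 p.2)).card =
      G.edgeFinset.card * (2 * ((r - 1) * (r - 1))) := by
    rw [prod_filter_card_snd Dset G.edgeFinset (fun q g => ¬ pd q.1 g ∧ ¬ pd q.2 g)]
    rw [Finset.sum_congr rfl (fun g hg => ?_), Finset.sum_const, smul_eq_mul]
    refine count_pairs hbip hreg hg (Dset.filter (fun q => ¬ pd q.1 g ∧ ¬ pd q.2 g)) ?_
    intro q
    rw [Finset.mem_filter, hDset, Finset.mem_filter, Finset.mem_product]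
    tauto
  have e45 : (∑ q ∈ Dset,
      (G.edgeFinset.filter (fun g => ¬ pd q.1 g ∧ ¬ pd q.2 g)).card) =
      G.edgeFinset.card * (2 * ((r - 1) * (r - 1))) := by
    rw [← e4, e5]
  -- counting Dset
  have e6 : Dset.card + ((G.edgeFinset ×ˢ G.edgeFinset).filter
      (fun q => ¬ pd q.1 q.2)).card = G.edgeFinset.card * G.edgeFinset.card := by
    have := Finset.card_filter_add_card_filter_not
      (s := G.edgeFinset ×ˢ G.edgeFinset) (p := fun q => pd q.1 q.2)
    rw [Finset.card_product] at this
    rw [hDset]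
    exact this
  have e7 : ((G.edgeFinset ×ˢ G.edgeFinset).filter
      (fun q => ¬ pd q.1 q.2)).card + G.edgeFinset.card = 2 * r * G.edgeFinset.card := by
    rw [prod_filter_card_fst G.edgeFinset G.edgeFinset (fun e f => ¬ pd e f)]
    have hterm : ∀ e ∈ G.edgeFinset,
        (G.edgeFinset.filter (fun f => ¬ pd e f)).card + 1 = 2 * r := by
      intro e he
      exact count_touch hreg he _ (fun f => Finset.mem_filter)
    have := Finset.sum_congr rfl hterm
    rw [Finset.sum_add_distrib, Finset.sum_const, Finset.sum_const, smul_eq_mul,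
      smul_eq_mul, mul_one] at this
    rw [this]
    ring
    -- pass to the integers
  have hswz : ((∑ q ∈ Dset,
      (G.edgeFinset.filter (fun g => ¬ pd q.1 g ∧ ¬ pd q.2 g)).card : ℕ) : ℤ) =
      ((n : ℤ) * r) * (2 * ((r : ℤ) - 1) * ((r : ℤ) - 1)) := by
    rw [e45, hmnr]
    push_cast [Nat.cast_sub (show 1 ≤ r by omega)]
    ring
  have hmz : ((G.edgeFinset.card : ℕ) : ℤ) = (n : ℤ) * r := by
    rw [hmnr]; push_cast; ring
  have hdz : ((Dset.card : ℕ) : ℤ) =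
      ((n : ℤ) * r) * ((n : ℤ) * r) - 2 * r * ((n : ℤ) * r) + (n : ℤ) * r := by
    have h6' : ((Dset.card : ℕ) : ℤ) + (((G.edgeFinset ×ˢ G.edgeFinset).filter
        (fun q => ¬ pd q.1 q.2)).card : ℤ) =
        (G.edgeFinset.card : ℤ) * G.edgeFinset.card := by exact_mod_cast e6
    have h7' : (((G.edgeFinset ×ˢ G.edgeFinset).filter
        (fun q => ¬ pd q.1 q.2)).card : ℤ) + (G.edgeFinset.card : ℤ) =
        2 * r * G.edgeFinset.card := by exact_mod_cast e7
    rw [hmz] at h6' h7'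
    linarith
  have h8 : 6 * (F.card : ℤ) =
      (Dset.card : ℤ) * G.edgeFinset.card - 4 * r * Dset.card + 2 * Dset.card +
      ((∑ q ∈ Dset,
        (G.edgeFinset.filter (fun g => ¬ pd q.1 g ∧ ¬ pd q.2 g)).card : ℕ) : ℤ) := by
    have h1' : (T3.card : ℤ) = 6 * F.card := by exact_mod_cast hT3card
    have h2' : (T3.card : ℤ) + ((∑ q ∈ Dset,
        (G.edgeFinset.filter (fun g => ¬(pd q.1 g ∧ pd q.2 g))).card : ℕ) : ℤ) =
        (Dset.card : ℤ) * G.edgeFinset.card := by exact_mod_cast sum1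
    have h3' : ((∑ q ∈ Dset,
        (G.edgeFinset.filter (fun g => ¬(pd q.1 g ∧ pd q.2 g))).card : ℕ) : ℤ) +
        ((∑ q ∈ Dset,
        (G.edgeFinset.filter (fun g => ¬ pd q.1 g ∧ ¬ pd q.2 g)).card : ℕ) : ℤ) +
        2 * Dset.card = 4 * r * Dset.card := by exact_mod_cast sum2
    linarith
  rw [hswz, hdz, hmz] at h8
  -- choose identities
  have hc3m := six_choose_three (n * r)
  have hc3r := six_choose_three r
  have hc2r := two_choose_two r
  push_cast at hc3m
  -- conclude
  rw [hmc]
  apply mul_left_cancel₀ (show (6 : ℤ) ≠ 0 by norm_num)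
  rw [h8]
  linear_combination (-1 : ℤ) * hc3m + 2 * (n : ℤ) * hc3r +
    6 * (n : ℤ) * ((n : ℤ) * (r : ℤ) - 2 * (r : ℤ) - ((r : ℤ) - 2)) * hc2r
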